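/- Let ν ∈ L¹(ℝ) be a probability density, α₀ ∈ (-1,1), V(x) = 1 + |x|, and define Markov kernels P_α f(x) = ∫_ℝ f(y) ν(y − αx) dy. Then ‖P_α − P_{α₀}‖_{0,1} := sup_{‖f‖_∞ ≤ 1} sup_x |P_α f(x) − P_{α₀} f(x)|/V(x) → 0 as α → α₀. -/

import Mathlib

open MeasureTheory Filter Topology ENNReal

/-- The AR(1) transition operator `P_α f (x) = ∫ f(y) ν(y - αx) dy`. -/
noncomputable def arOp (ν : ℝ → ℝ) (α : ℝ) (f : ℝ → ℝ) (x : ℝ) : ℝ :=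
  ∫ y, f y * ν (y - α * x)

/-- The operator "norm" `‖P_α - P_{α₀}‖_{0,1} = sup_{‖f‖_0 ≤ 1} sup_x |P_α f(x) - P_{α₀} f(x)| / (1+|x|)`,
valued in `ℝ≥0∞`. -/
noncomputable def arDiffNorm01 (ν : ℝ → ℝ) (α α₀ : ℝ) : ℝ≥0∞ :=
  ⨆ f : {f : ℝ → ℝ // Measurable f ∧ ∀ y, |f y| ≤ 1}, ⨆ x : ℝ,
    ENNReal.ofReal (|arOp ν α f.1 x - arOp ν α₀ f.1 x| / (1 + |x|))


noncomputable def Hnu (ν : ℝ → ℝ) (s : ℝ) : ℝ := ∫ y, |ν (y - s) - ν y|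

lemma Hnu_tendsto (ν : ℝ → ℝ) (hint : Integrable ν) :
    Tendsto (Hnu ν) (𝓝 0) (𝓝 0) := by
  rw [Metric.tendsto_nhds]
  intro ε hε
  obtain ⟨g, hgsupp, hgapprox, hgcont, hgint⟩ :=
    hint.exists_hasCompactSupport_integral_sub_le (by positivity : (0:ℝ) < ε/4)
  obtain ⟨R, hR⟩ := hgsupp.isCompact.isBounded.subset_closedBall 0
  obtain ⟨C, hC⟩ : ∃ C, ∀ y, |g y| ≤ C := by
    obtain ⟨C, hC⟩ := hgcont.bounded_above_of_compact_support hgsupp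
    exact ⟨C, fun y => by simpa [Real.norm_eq_abs] using hC y⟩
  have hC0 : 0 ≤ C := le_trans (abs_nonneg _) (hC 0)
  have hmid : Tendsto (fun s => ∫ y, |g (y - s) - g y|) (𝓝 0) (𝓝 0) := by
    have key : Tendsto (fun s => ∫ y, |g (y - s) - g y|) (𝓝 0)
        (𝓝 (∫ y, |g (y - (0:ℝ)) - g y|)) := by
      apply tendsto_integral_filter_of_dominated_convergence
        (Set.indicator (Metric.closedBall (0:ℝ) (R+1)) (fun _ => 2*C))
      · filter_upwards with s
        exact ((hgcont.comp (continuous_id.sub continuous_const)).sub hgcont).abs.aestronglyMeasurable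
      · have h1 : ∀ᶠ s : ℝ in 𝓝 0, |s| < 1 := by
          have := Metric.ball_mem_nhds (0:ℝ) one_pos
          filter_upwards [this] with s hs; simpa [Real.dist_eq] using hs
        filter_upwards [h1] with s hs
        filter_upwards with y
        by_cases hy : y ∈ Metric.closedBall (0:ℝ) (R+1)
        · rw [Set.indicator_of_mem hy]
          calc ‖|g (y - s) - g y|‖ = |g (y - s) - g y| := by
                rw [Real.norm_eq_abs, abs_abs]
            _ ≤ |g (y - s)| + |g y| := abs_sub _ _
            _ ≤ C + C := add_le_add (hC _) (hC _)
            _ = 2*C := by ring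
        · rw [Set.indicator_of_notMem hy]
          have hy' : R + 1 < |y| := by
            simpa [Metric.mem_closedBall, Real.dist_eq, not_le] using hy
          have hg1 : g y = 0 := by
            apply image_eq_zero_of_notMem_tsupport
            intro hmem
            have := hR hmem
            simp only [Metric.mem_closedBall, Real.dist_eq, sub_zero] at this
            linarith
          have hg2 : g (y - s) = 0 := by
            apply image_eq_zero_of_notMem_tsupport
            intro hmem
            have := hR hmem
            simp only [Metric.mem_closedBall, Real.dist_eq, sub_zero] at this
            have : |y| - |s| ≤ |y - s| := by
              have := abs_sub_abs_le_abs_sub y s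
              linarith
            linarith [abs_sub_abs_le_abs_sub y s]
          simp [hg1, hg2]
      · rw [integrable_indicator_iff measurableSet_closedBall]
        apply (integrableOn_const_iff (C := 2*C) enorm_ne_top).2
        exact Or.inr (measure_closedBall_lt_top)
      · filter_upwards with y
        have hc : Continuous fun s : ℝ => |g (y - s) - g y| :=
          ((hgcont.comp (continuous_const.sub continuous_id)).sub continuous_const).abs
        exact hc.tendsto 0
    simpa using key
  have happrox : ∀ s : ℝ, Hnu ν s ≤ ε/4 + (∫ y, |g (y - s) - g y|) + ε/4 := by
    intro s
    have i1 : Integrable (fun y => |ν (y - s) - g (y - s)|) :=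
      ((hint.sub hgint).comp_sub_right s).abs
    have i2 : Integrable (fun y => |g (y - s) - g y|) :=
      ((hgint.comp_sub_right s).sub hgint).abs
    have i3 : Integrable (fun y => |g y - ν y|) := (hgint.sub hint).abs
    have key : Hnu ν s ≤ (∫ y, |ν (y - s) - g (y - s)|) + (∫ y, |g (y - s) - g y|)
        + ∫ y, |g y - ν y| := by
      have step1 : Hnu ν s ≤ ∫ y, (|ν (y - s) - g (y - s)| + |g (y - s) - g y| + |g y - ν y|) := by
        apply integral_mono (((hint.comp_sub_right s).sub hint).abs) ((i1.add i2).add i3)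
        intro y
        calc |ν (y - s) - ν y| ≤ |ν (y - s) - g y| + |g y - ν y| := abs_sub_le _ _ _
          _ ≤ (|ν (y - s) - g (y - s)| + |g (y - s) - g y|) + |g y - ν y| := by
              have := abs_sub_le (ν (y - s)) (g (y - s)) (g y)
              linarith
      have i12 : Integrable (fun y => |ν (y - s) - g (y - s)| + |g (y - s) - g y|) := i1.add i2
      rw [integral_add i12 i3, integral_add i1 i2] at step1
      exact step1
    have e1 : (∫ y, |ν (y - s) - g (y - s)|) = ∫ y, |ν y - g y| :=
      integral_sub_right_eq_self (fun z => |ν z - g z|) s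
    have e2 : (∫ y, |ν y - g y|) ≤ ε/4 := by
      calc (∫ y, |ν y - g y|) = ∫ y, ‖ν y - g y‖ := by simp [Real.norm_eq_abs]
        _ ≤ ε/4 := hgapprox
    have e3 : (∫ y, |g y - ν y|) ≤ ε/4 := by
      calc (∫ y, |g y - ν y|) = ∫ y, ‖ν y - g y‖ := by
            congr 1; funext y; rw [Real.norm_eq_abs, abs_sub_comm]
        _ ≤ ε/4 := hgapprox
    calc Hnu ν s ≤ _ := key
      _ ≤ ε/4 + (∫ y, |g (y - s) - g y|) + ε/4 := by rw [e1]; linarith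
  have hmid' : ∀ᶠ s : ℝ in 𝓝 0, (∫ y, |g (y - s) - g y|) < ε/4 :=
    hmid.eventually_lt_const (by positivity : (0:ℝ) < ε/4)
  filter_upwards [hmid'] with s hs
  have h0 : 0 ≤ Hnu ν s := integral_nonneg fun y => abs_nonneg _
  rw [Real.dist_eq, sub_zero, abs_of_nonneg h0]
  have := happrox s
  linarith

lemma Hnu_le_two (ν : ℝ → ℝ) (hpos : ∀ x, 0 ≤ ν x) (hint : Integrable ν)
    (hmass : ∫ x, ν x = 1) (s : ℝ) : Hnu ν s ≤ 2 := by
  have i1 : Integrable (fun y => |ν (y - s)|) := (hint.comp_sub_right s).abs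
  have i2 : Integrable (fun y => |ν y|) := hint.abs
  have step : Hnu ν s ≤ ∫ y, (|ν (y - s)| + |ν y|) := by
    apply integral_mono (((hint.comp_sub_right s).sub hint).abs) (i1.add i2)
    intro y
    exact abs_sub _ _
  rw [integral_add i1 i2] at step
  have e1 : (∫ y, |ν (y - s)|) = ∫ y, |ν y| :=
    integral_sub_right_eq_self (fun z => |ν z|) s
  have e2 : (∫ y, |ν y|) = 1 := by
    rw [← hmass]; congr 1; funext y; exact abs_of_nonneg (hpos y)
  rw [e1, e2] at step
  linarith

lemma arOp_diff_le (ν : ℝ → ℝ) (hint : Integrable ν) (f : ℝ → ℝ)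
    (hf : Measurable f) (hb : ∀ y, |f y| ≤ 1) (α α₀ x : ℝ) :
    |arOp ν α f x - arOp ν α₀ f x| ≤ Hnu ν ((α - α₀) * x) := by
  have h1 : Integrable (fun y => ν (y - α * x)) := hint.comp_sub_right _
  have h2 : Integrable (fun y => ν (y - α₀ * x)) := hint.comp_sub_right _
  have hfb : ∃ C, ∀ y, ‖f y‖ ≤ C := ⟨1, fun y => by simpa [Real.norm_eq_abs] using hb y⟩
  have hf1 : Integrable (fun y => f y * ν (y - α * x)) :=
    h1.bdd_mul hf.aestronglyMeasurable (ae_of_all _ hfb.choose_spec)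
  have hf2 : Integrable (fun y => f y * ν (y - α₀ * x)) :=
    h2.bdd_mul hf.aestronglyMeasurable (ae_of_all _ hfb.choose_spec)
  rw [arOp, arOp, ← integral_sub hf1 hf2]
  calc |∫ y, (f y * ν (y - α * x) - f y * ν (y - α₀ * x))|
      ≤ ∫ y, |f y * ν (y - α * x) - f y * ν (y - α₀ * x)| := by
        simpa [Real.norm_eq_abs] using
          norm_integral_le_integral_norm (fun y => f y * ν (y - α * x) - f y * ν (y - α₀ * x))
    _ ≤ ∫ y, |ν (y - α * x) - ν (y - α₀ * x)| := by
        have ia : Integrable (fun y => |f y * ν (y - α * x) - f y * ν (y - α₀ * x)|) :=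
          (hf1.sub hf2).abs
        have ib : Integrable (fun y => |ν (y - α * x) - ν (y - α₀ * x)|) := (h1.sub h2).abs
        apply integral_mono ia ib
        intro y
        simp only []
        rw [← mul_sub, abs_mul]
        exact mul_le_of_le_one_left (abs_nonneg _) (hb y)
    _ = Hnu ν ((α - α₀) * x) := by
        have : (fun y => |ν (y - α * x) - ν (y - α₀ * x)|)
            = fun y => (fun z => |ν (z - (α - α₀) * x) - ν z|) (y - α₀ * x) := by
          funext y
          simp only []
          rw [show y - α₀ * x - (α - α₀) * x = y - α * x by ring]
        rw [this, integral_sub_right_eq_self (fun z => |ν (z - (α - α₀) * x) - ν z|) (α₀ * x)]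
        rfl

/-- for any probability density `ν` and any `α₀ ∈ (-1,1)`, the AR(1) kernels
satisfy the weak continuity condition `‖P_α - P_{α₀}‖_{0,1} → 0` as `α → α₀`. -/
theorem stmt9 (ν : ℝ → ℝ) (hpos : ∀ x, 0 ≤ ν x) (hint : Integrable ν)
    (hmass : ∫ x, ν x = 1) (α₀ : ℝ) (hα₀ : α₀ ∈ Set.Ioo (-1 : ℝ) 1) :
    Tendsto (fun α : ℝ => arDiffNorm01 ν α α₀) (𝓝 α₀) (𝓝 0) := by
  rw [ENNReal.tendsto_nhds_zero]
  intro ε hε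
  obtain ⟨e, he, hee⟩ : ∃ e : ℝ, 0 < e ∧ ENNReal.ofReal e ≤ ε := by
    rcases eq_or_ne ε ⊤ with h | h
    · exact ⟨1, one_pos, by simp [h]⟩
    · exact ⟨ε.toReal, ENNReal.toReal_pos hε.ne' h, by rw [ENNReal.ofReal_toReal h]⟩
  obtain ⟨δ, hδ, hδH⟩ := Metric.eventually_nhds_iff.mp
    ((Hnu_tendsto ν hint).eventually_lt_const he)
  set R : ℝ := 2 / e with hRdef
  have hR0 : 0 < R := by positivity
  have key : ∀ α : ℝ, |α - α₀| < δ / (R + 1) → ∀ x : ℝ, Hnu ν ((α - α₀) * x) ≤ e * (1 + |x|) := by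
    intro α hα x
    rcases le_or_gt |x| R with hx | hx
    · have hs : |(α - α₀) * x| < δ := by
        rw [abs_mul]
        calc |α - α₀| * |x| ≤ |α - α₀| * (R + 1) := by
              apply mul_le_mul_of_nonneg_left (by linarith) (abs_nonneg _)
          _ < (δ / (R + 1)) * (R + 1) := by
              apply mul_lt_mul_of_pos_right hα (by linarith)
          _ = δ := div_mul_cancel₀ _ (by linarith)
      have := hδH (y := (α - α₀) * x) (by simpa [Real.dist_eq] using hs)
      have h1x : (1 : ℝ) ≤ 1 + |x| := by have := abs_nonneg x; linarith
      calc Hnu ν ((α - α₀) * x) ≤ e := this.le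
        _ ≤ e * (1 + |x|) := le_mul_of_one_le_right he.le h1x
    · have h2 : Hnu ν ((α - α₀) * x) ≤ 2 := Hnu_le_two ν hpos hint hmass _
      have : e * (1 + R) = e + 2 := by
        rw [mul_add, mul_one, hRdef, mul_div_cancel₀ _ he.ne']
      calc Hnu ν ((α - α₀) * x) ≤ 2 := h2
        _ ≤ e + 2 := by linarith
        _ = e * (1 + R) := this.symm
        _ ≤ e * (1 + |x|) := by
            apply mul_le_mul_of_nonneg_left (by linarith) he.le
  have hev : ∀ᶠ α : ℝ in 𝓝 α₀, |α - α₀| < δ / (R + 1) := by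
    have : Metric.ball α₀ (δ / (R + 1)) ∈ 𝓝 α₀ := Metric.ball_mem_nhds _ (by positivity)
    filter_upwards [this] with α hα
    simpa [Real.dist_eq] using hα
  filter_upwards [hev] with α hα
  refine le_trans (iSup_le fun f => iSup_le fun x => ?_) hee
  apply ENNReal.ofReal_le_ofReal
  have hx1 : (0 : ℝ) < 1 + |x| := by have := abs_nonneg x; linarith
  rw [div_le_iff₀ hx1]
  calc |arOp ν α f.1 x - arOp ν α₀ f.1 x| ≤ Hnu ν ((α - α₀) * x) :=
        arOp_diff_le ν hint f.1 f.2.1 f.2.2 α α₀ x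
    _ ≤ e * (1 + |x|) := key α hα x
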